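/- Let A be SPD partitioned as [[A_ff, A_fc],[A_cf, A_cc]] with P_ideal = [−A_ff⁻¹A_fc; I]. Then for every u ∈ ℝⁿ, taking w_c = u_c gives the energy-norm bound ‖u − P_ideal u_c‖_A² ≤ ‖A_ff⁻¹‖ · ‖A u‖². In particular, if ‖A_ff⁻¹‖ ≤ K/‖A‖ then P_ideal satisfies the strong approximation property with constant K. -/

import Mathlib

open scoped Matrix.Norms.L2Operator
open Matrix

private lemma dot_self_nonneg {ι : Type*} [Fintype ι] (v : ι → ℝ) : 0 ≤ v ⬝ᵥ v :=
  Finset.sum_nonneg fun i _ => mul_self_nonneg _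

private lemma dot_mulVec_le (n : ℕ) (M : Matrix (Fin n) (Fin n) ℝ) (r : Fin n → ℝ) :
    r ⬝ᵥ M.mulVec r ≤ ‖M‖ * (r ⬝ᵥ r) := by
  let r' : EuclideanSpace ℝ (Fin n) := WithLp.toLp 2 r
  let s' : EuclideanSpace ℝ (Fin n) := (EuclideanSpace.equiv (Fin n) ℝ).symm (M.mulVec r)
  have h1 : r ⬝ᵥ M.mulVec r = inner ℝ s' r' := by
    simp [PiLp.inner_apply, dotProduct, s', r', mul_comm]
  have h2 : r ⬝ᵥ r = ‖r'‖ * ‖r'‖ := by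
    rw [← real_inner_self_eq_norm_mul_norm, PiLp.inner_apply]
    simp [dotProduct, r', sq]
  have h3 : ‖s'‖ ≤ ‖M‖ * ‖r'‖ := M.l2_opNorm_mulVec r'
  calc r ⬝ᵥ M.mulVec r = inner ℝ s' r' := h1
    _ ≤ ‖s'‖ * ‖r'‖ := real_inner_le_norm s' r'
    _ ≤ (‖M‖ * ‖r'‖) * ‖r'‖ := by
        apply mul_le_mul_of_nonneg_right h3 (norm_nonneg _)
    _ = ‖M‖ * (r ⬝ᵥ r) := by rw [h2]; ring

/-- energy-norm bound for ideal interpolation, and the SAP consequence. -/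
theorem ideal_interp_energy_bound (nf nc : ℕ)
    (Aff : Matrix (Fin nf) (Fin nf) ℝ) (Afc : Matrix (Fin nf) (Fin nc) ℝ)
    (Acf : Matrix (Fin nc) (Fin nf) ℝ) (Acc : Matrix (Fin nc) (Fin nc) ℝ)
    (hA : (Matrix.fromBlocks Aff Afc Acf Acc).PosDef)
    (hAff : IsUnit Aff.det)
    (A : Matrix (Fin nf ⊕ Fin nc) (Fin nf ⊕ Fin nc) ℝ)
    (hAdef : A = Matrix.fromBlocks Aff Afc Acf Acc)
    (Pideal : Matrix (Fin nf ⊕ Fin nc) (Fin nc) ℝ)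
    (hP : Pideal = Matrix.fromRows (-(Aff⁻¹ * Afc)) (1 : Matrix (Fin nc) (Fin nc) ℝ)) :
    (∀ u : Fin nf ⊕ Fin nc → ℝ,
        (A.mulVec (u - Pideal.mulVec (fun j => u (Sum.inr j)))) ⬝ᵥ
            (u - Pideal.mulVec (fun j => u (Sum.inr j))) ≤
          ‖Aff⁻¹‖ * ((A.mulVec u) ⬝ᵥ (A.mulVec u))) ∧
    (∀ K : ℝ, ‖Aff⁻¹‖ ≤ K / ‖A‖ →
      ∀ u : Fin nf ⊕ Fin nc → ℝ, ∃ wc : Fin nc → ℝ,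
        (A.mulVec (u - Pideal.mulVec wc)) ⬝ᵥ (u - Pideal.mulVec wc) ≤
          K / ‖A‖ * ((A.mulVec u) ⬝ᵥ (A.mulVec u))) := by
  have main : ∀ u : Fin nf ⊕ Fin nc → ℝ,
      (A.mulVec (u - Pideal.mulVec (fun j => u (Sum.inr j)))) ⬝ᵥ
          (u - Pideal.mulVec (fun j => u (Sum.inr j))) ≤
        ‖Aff⁻¹‖ * ((A.mulVec u) ⬝ᵥ (A.mulVec u)) := by
    intro u
    set uf : Fin nf → ℝ := fun i => u (Sum.inl i) with huf
    set uc : Fin nc → ℝ := fun j => u (Sum.inr j) with huc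
    have hu : u = Sum.elim uf uc := by funext x; cases x <;> rfl
    set ef : Fin nf → ℝ := uf + (Aff⁻¹ * Afc).mulVec uc with hef
    have he : u - Pideal.mulVec uc = Sum.elim ef 0 := by
      funext x
      cases x with
      | inl i =>
        simp [hP, Matrix.fromRows_mulVec, hef, huf, Matrix.neg_mulVec, Pi.add_apply,
          sub_neg_eq_add]
      | inr j =>
        simp [hP, Matrix.fromRows_mulVec, huc]
    set r : Fin nf → ℝ := Aff.mulVec uf + Afc.mulVec uc with hr
    have hAffef : Aff.mulVec ef = r := by
      simp only [hef, hr, Matrix.mulVec_add, Matrix.mulVec_mulVec, ← Matrix.mul_assoc,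
        Matrix.mul_nonsing_inv Aff hAff, Matrix.one_mul]
    have hefr : ef = Aff⁻¹.mulVec r := by
      rw [← hAffef, Matrix.mulVec_mulVec, Matrix.nonsing_inv_mul Aff hAff, Matrix.one_mulVec]
    have hAe : A.mulVec (u - Pideal.mulVec uc) = Sum.elim r (Acf.mulVec ef) := by
      rw [he, hAdef, Matrix.fromBlocks_mulVec]
      simp [hAffef]
    have hAu : A.mulVec u = Sum.elim r (Acf.mulVec uf + Acc.mulVec uc) := by
      rw [hu, hAdef, Matrix.fromBlocks_mulVec, hr]
      simp
    have hLHS : (A.mulVec (u - Pideal.mulVec uc)) ⬝ᵥ (u - Pideal.mulVec uc)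
        = r ⬝ᵥ Aff⁻¹.mulVec r := by
      rw [hAe, he, sumElim_dotProduct_sumElim, dotProduct_zero, add_zero, ← hefr]
    have hRHS : r ⬝ᵥ r ≤ (A.mulVec u) ⬝ᵥ (A.mulVec u) := by
      rw [hAu, sumElim_dotProduct_sumElim]
      have : (0:ℝ) ≤ (Acf.mulVec uf + Acc.mulVec uc) ⬝ᵥ (Acf.mulVec uf + Acc.mulVec uc) :=
        dot_self_nonneg _
      linarith
    calc (A.mulVec (u - Pideal.mulVec uc)) ⬝ᵥ (u - Pideal.mulVec uc)
        = r ⬝ᵥ Aff⁻¹.mulVec r := hLHS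
      _ ≤ ‖Aff⁻¹‖ * (r ⬝ᵥ r) := dot_mulVec_le nf Aff⁻¹ r
      _ ≤ ‖Aff⁻¹‖ * ((A.mulVec u) ⬝ᵥ (A.mulVec u)) :=
          mul_le_mul_of_nonneg_left hRHS (norm_nonneg _)
  refine ⟨main, fun K hK u => ⟨fun j => u (Sum.inr j), ?_⟩⟩
  calc (A.mulVec (u - Pideal.mulVec (fun j => u (Sum.inr j)))) ⬝ᵥ
        (u - Pideal.mulVec (fun j => u (Sum.inr j)))
      ≤ ‖Aff⁻¹‖ * ((A.mulVec u) ⬝ᵥ (A.mulVec u)) := main u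
    _ ≤ K / ‖A‖ * ((A.mulVec u) ⬝ᵥ (A.mulVec u)) :=
        mul_le_mul_of_nonneg_right hK (dot_self_nonneg _)
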